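/- arXiv:2103.06698 — 3 statements merged into one kernel-verified Lean document; each statement's English description precedes it below -/
import Mathlib

section
/- Let u, v, w ≥ 3 be real parameters and set B := sin²(π/u)·sin²(π/w) − cos²(π/v). If B ≠ 0, then the inverse of the Coxeter–Schläfli matrix (b^{ij}) is the symmetric 4×4 matrix (h_{ij}) given by (1/B) times the matrix with rows: (sin²(π/w) − cos²(π/v), cos(π/u)sin²(π/w), cos(π/u)cos(π/v), cos(π/u)cos(π/v)cos(π/w)); (cos(π/u)sin²(π/w), sin²(π/w), cos(π/v), cos(π/w)cos(π/v)); (cos(π/u)cos(π/v), cos(π/v), sin²(π/u), cos(π/w)sin²(π/u)); (cos(π/u)cos(π/v)cos(π/w), cos(π/w)cos(π/v), cos(π/w)sin²(π/u), sin²(π/u) − cos²(π/v)). -/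
open Real

/-- The Coxeter–Schläfli matrix of the orthoscheme with parameters (u, v, w). -/
noncomputable def coxeterSchlafliMatrix (u v w : ℝ) : Matrix (Fin 4) (Fin 4) ℝ :=
  !![1, -Real.cos (π/u), 0, 0;
     -Real.cos (π/u), 1, -Real.cos (π/v), 0;
     0, -Real.cos (π/v), 1, -Real.cos (π/w);
     0, 0, -Real.cos (π/w), 1]

theorem inv_coxeterSchlafliMatrix (u v w : ℝ) (hu : 3 ≤ u) (hv : 3 ≤ v) (hw : 3 ≤ w)
    (hB : Real.sin (π/u) ^ 2 * Real.sin (π/w) ^ 2 - Real.cos (π/v) ^ 2 ≠ 0) :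
    (coxeterSchlafliMatrix u v w)⁻¹ =
      (Real.sin (π/u) ^ 2 * Real.sin (π/w) ^ 2 - Real.cos (π/v) ^ 2)⁻¹ •
      !![Real.sin (π/w) ^ 2 - Real.cos (π/v) ^ 2,
         Real.cos (π/u) * Real.sin (π/w) ^ 2,
         Real.cos (π/u) * Real.cos (π/v),
         Real.cos (π/u) * Real.cos (π/v) * Real.cos (π/w);
         Real.cos (π/u) * Real.sin (π/w) ^ 2,
         Real.sin (π/w) ^ 2,
         Real.cos (π/v),
         Real.cos (π/w) * Real.cos (π/v);
         Real.cos (π/u) * Real.cos (π/v),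
         Real.cos (π/v),
         Real.sin (π/u) ^ 2,
         Real.cos (π/w) * Real.sin (π/u) ^ 2;
         Real.cos (π/u) * Real.cos (π/v) * Real.cos (π/w),
         Real.cos (π/w) * Real.cos (π/v),
         Real.cos (π/w) * Real.sin (π/u) ^ 2,
         Real.sin (π/u) ^ 2 - Real.cos (π/v) ^ 2] := by
  apply Matrix.inv_eq_right_inv
  have hsu : Real.sin (π/u) ^ 2 = 1 - Real.cos (π/u) ^ 2 := by rw [Real.sin_sq]
  have hsw : Real.sin (π/w) ^ 2 = 1 - Real.cos (π/w) ^ 2 := by rw [Real.sin_sq]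
  rw [hsu, hsw] at hB ⊢
  ext i j
  fin_cases i <;> fin_cases j <;>
    simp [coxeterSchlafliMatrix, Matrix.mul_apply, Fin.sum_univ_four, Matrix.one_apply] <;>
    field_simp <;> ring
end

section
/- Let u, v, w ≥ 3 be real parameters with B := sin²(π/u)·sin²(π/w) − cos²(π/v) < 0, and let (h_{ij}) be the inverse of the Coxeter–Schläfli matrix. Then h_{00} > 0 if and only if 1/v + 1/w < 1/2, and h_{33} > 0 if and only if 1/u + 1/v < 1/2. -/
open Real

lemma aux_det (a b c : ℝ) :
    (!![1, -a, 0, 0; -a, 1, -b, 0; 0, -b, 1, -c; 0, 0, -c, 1] : Matrix (Fin 4) (Fin 4) ℝ).det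
      = (1-a^2)*(1-c^2) - b^2 := by
  simp [Matrix.det_succ_row_zero, Fin.sum_univ_succ, Fin.succAbove]
  ring

lemma aux_adj00 (a b c : ℝ) :
    (!![1, -a, 0, 0; -a, 1, -b, 0; 0, -b, 1, -c; 0, 0, -c, 1] : Matrix (Fin 4) (Fin 4) ℝ).adjugate 0 0
      = 1 - b^2 - c^2 := by
  simp [Matrix.adjugate_apply, Matrix.det_succ_row_zero, Fin.sum_univ_succ,
    Matrix.updateRow_apply, Pi.single_apply, Fin.succAbove]
  ring

set_option maxHeartbeats 1600000 in
lemma aux_adj33 (a b c : ℝ) :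
    (!![1, -a, 0, 0; -a, 1, -b, 0; 0, -b, 1, -c; 0, 0, -c, 1] : Matrix (Fin 4) (Fin 4) ℝ).adjugate 3 3
      = 1 - a^2 - b^2 := by
  simp (config := { decide := true }) [Matrix.adjugate_apply, Matrix.det_succ_row_zero,
    Fin.sum_univ_succ, Matrix.updateRow_apply, Pi.single_apply, Fin.succAbove]
  ring

lemma aux_key (v w : ℝ) (hv : 3 ≤ v) (hw : 3 ≤ w) :
    1 < Real.cos (π/v)^2 + Real.cos (π/w)^2 ↔ 1/v + 1/w < 1/2 := by
  have hπ := Real.pi_pos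
  have hv0 : (0:ℝ) < v := by linarith
  have hw0 : (0:ℝ) < w := by linarith
  have hv1 : 0 < π/v := div_pos hπ hv0
  have hw1 : 0 < π/w := div_pos hπ hw0
  have hv2 : π/v ≤ π/3 := div_le_div_of_nonneg_left hπ.le (by norm_num) hv
  have hw2 : π/w ≤ π/3 := div_le_div_of_nonneg_left hπ.le (by norm_num) hw
  have hs : 0 < Real.sin (π/v) := Real.sin_pos_of_pos_of_lt_pi hv1 (by linarith)
  have hc : 0 < Real.cos (π/w) :=
    Real.cos_pos_of_mem_Ioo ⟨by linarith, by linarith⟩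
  have h1 : (1 < Real.cos (π/v)^2 + Real.cos (π/w)^2) ↔
      Real.sin (π/v)^2 < Real.cos (π/w)^2 := by
    have := Real.sin_sq_add_cos_sq (π/v)
    constructor <;> intro <;> nlinarith
  have h2 : (Real.sin (π/v)^2 < Real.cos (π/w)^2) ↔ Real.sin (π/v) < Real.cos (π/w) := by
    constructor <;> intro <;> nlinarith
  have h3 : Real.sin (π/v) = Real.cos (π/2 - π/v) := (Real.cos_pi_div_two_sub _).symm
  have h4 : (Real.cos (π/2 - π/v) < Real.cos (π/w)) ↔ π/w < π/2 - π/v :=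
    Real.strictAntiOn_cos.lt_iff_gt ⟨by linarith, by linarith⟩ ⟨by linarith, by linarith⟩
  rw [h1, h2, h3, h4]
  rw [show π/w = π*(1/w) by ring, show π/2 - π/v = π*(1/2) - π*(1/v) by ring]
  constructor
  · intro h
    have : π*(1/v+1/w) < π*(1/2) := by nlinarith
    exact lt_of_mul_lt_mul_left (by linarith) hπ.le
  · intro h
    have : π*(1/v+1/w) < π*(1/2) := by
      exact (mul_lt_mul_iff_right₀ hπ).mpr h
    nlinarith

theorem principal_vertices_outer_iff (u v w : ℝ) (hu : 3 ≤ u) (hv : 3 ≤ v) (hw : 3 ≤ w)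
    (hB : Real.sin (π/u) ^ 2 * Real.sin (π/w) ^ 2 - Real.cos (π/v) ^ 2 < 0) :
    (0 < (coxeterSchlafliMatrix u v w)⁻¹ 0 0 ↔ 1/v + 1/w < 1/2) ∧
    (0 < (coxeterSchlafliMatrix u v w)⁻¹ 3 3 ↔ 1/u + 1/v < 1/2) := by
  set a := Real.cos (π/u)
  set b := Real.cos (π/v)
  set c := Real.cos (π/w)
  have hM : coxeterSchlafliMatrix u v w =
      !![1, -a, 0, 0; -a, 1, -b, 0; 0, -b, 1, -c; 0, 0, -c, 1] := rfl
  have hdet : (coxeterSchlafliMatrix u v w).det =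
      Real.sin (π/u) ^ 2 * Real.sin (π/w) ^ 2 - b ^ 2 := by
    rw [hM, aux_det, Real.sin_sq, Real.sin_sq]
  have hdetneg : (coxeterSchlafliMatrix u v w).det < 0 := by rw [hdet]; exact hB
  have hinv : ((coxeterSchlafliMatrix u v w).det)⁻¹ < 0 := inv_neg''.mpr hdetneg
  have e0 : (coxeterSchlafliMatrix u v w)⁻¹ 0 0 =
      ((coxeterSchlafliMatrix u v w).det)⁻¹ * (1 - b^2 - c^2) := by
    rw [Matrix.inv_def, Matrix.smul_apply, smul_eq_mul, Ring.inverse_eq_inv]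
    congr 1
    rw [hM, aux_adj00]
  have e3 : (coxeterSchlafliMatrix u v w)⁻¹ 3 3 =
      ((coxeterSchlafliMatrix u v w).det)⁻¹ * (1 - a^2 - b^2) := by
    rw [Matrix.inv_def, Matrix.smul_apply, smul_eq_mul, Ring.inverse_eq_inv]
    congr 1
    rw [hM, aux_adj33]
  constructor
  · rw [e0, ← aux_key v w hv hw]
    constructor
    · intro h
      nlinarith
    · intro h
      have : 1 - b^2 - c^2 < 0 := by nlinarith
      exact mul_pos_of_neg_of_neg hinv this
  · rw [e3, ← aux_key u v hu hv]
    constructor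
    · intro h
      nlinarith
    · intro h
      have : 1 - a^2 - b^2 < 0 := by nlinarith
      exact mul_pos_of_neg_of_neg hinv this
end

section
/- Let V be a real vector space with a symmetric bilinear form ⟨·,·⟩, let a₀, a₃ ∈ V, write hᵢⱼ := ⟨aᵢ, aⱼ⟩, and suppose h₀₀ > 0, h₃₃ > 0 and h₀₀h₃₃ − h₀₃² < 0. Set j := h₃₃ • a₀ − h₀₃ • a₃ and h := h₀₀ • a₃ − h₀₃ • a₀. Then −⟨j, h⟩ / √(⟨j, j⟩·⟨h, h⟩) = −h₀₃ / √(h₀₀·h₃₃). -/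
theorem cosh_dist_J_H (V : Type*) [AddCommGroup V] [Module ℝ V]
    (B : LinearMap.BilinForm ℝ V) (hB : ∀ x y : V, B x y = B y x)
    (a₀ a₃ : V)
    (h00 : 0 < B a₀ a₀) (h33 : 0 < B a₃ a₃)
    (h03 : B a₀ a₀ * B a₃ a₃ - (B a₀ a₃) ^ 2 < 0)
    (j h : V) (hj : j = B a₃ a₃ • a₀ - B a₀ a₃ • a₃)
    (hh : h = B a₀ a₀ • a₃ - B a₀ a₃ • a₀) :
    -(B j h) / Real.sqrt (B j j * B h h) =
      -(B a₀ a₃) / Real.sqrt (B a₀ a₀ * B a₃ a₃) := by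
  set p := B a₀ a₀ with hp
  set q := B a₃ a₃ with hq
  set r := B a₀ a₃ with hr
  have hsym : B a₃ a₀ = r := (hB a₃ a₀)
  have hjh : B j h = r * (r ^ 2 - p * q) := by
    simp only [hj, hh, map_sub, map_smul, LinearMap.sub_apply, LinearMap.smul_apply,
      smul_eq_mul, hsym, ← hp, ← hq, ← hr]
    ring
  have hjj : B j j = q * (p * q - r ^ 2) := by
    simp only [hj, map_sub, map_smul, LinearMap.sub_apply, LinearMap.smul_apply,
      smul_eq_mul, hsym, ← hp, ← hq, ← hr]
    ring
  have hhh : B h h = p * (p * q - r ^ 2) := by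
    simp only [hh, map_sub, map_smul, LinearMap.sub_apply, LinearMap.smul_apply,
      smul_eq_mul, hsym, ← hp, ← hq, ← hr]
    ring
  have hd : 0 < r ^ 2 - p * q := by linarith
  have hsqrt : Real.sqrt (B j j * B h h) = Real.sqrt (p * q) * (r ^ 2 - p * q) := by
    rw [hjj, hhh]
    have : q * (p * q - r ^ 2) * (p * (p * q - r ^ 2)) = (p * q) * (r ^ 2 - p * q) ^ 2 := by
      ring
    rw [this, Real.sqrt_mul (by positivity), Real.sqrt_sq hd.le]
  rw [hsqrt, hjh]
  have hpq : 0 < Real.sqrt (p * q) := Real.sqrt_pos.mpr (by positivity)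
  field_simp
end
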